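/- arXiv:1703.08038 — 2 statements merged into one kernel-verified Lean document; each statement's English description precedes it below -/
import Mathlib

section
/- Let P : [0,∞) → ℂ be a polynomial and λ ∈ ℂ. Suppose e^{λt}P(t) = ∑_{j=1}^m c_j e^{μ_j t} + R(t) for all t ≥ 0, where the μ_j are distinct complex numbers and R : [0,∞) → ℂ is continuous with |R(t)| ≤ C e^{(Re λ - ε)t} for some ε > 0. If e^{λt}P(t) is not identically of smaller growth (i.e., P ≠ 0), then λ = μ_j for some j, P is constant, and P(0) = c_j. -/
open Filter intervalIntegral

lemma aux_exp_integral {ε : ℝ} (hε : 0 < ε) (T : ℝ) :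
    ∫ t in (0:ℝ)..T, Real.exp (-ε * t) = (1 - Real.exp (-ε * T)) / ε := by
  have D : ∀ x : ℝ, HasDerivAt (fun y : ℝ => Real.exp (-ε * y) / (-ε)) (Real.exp (-ε * x)) x := by
    intro x
    have h1 : HasDerivAt (fun y : ℝ => -ε * y) (-ε) x := by
      simpa using (hasDerivAt_id x).const_mul (-ε)
    have h2 := ((Real.hasDerivAt_exp (-ε * x)).comp x h1).div_const (-ε)
    rw [mul_div_assoc, div_self (neg_ne_zero.2 hε.ne'), mul_one] at h2
    exact h2
  have hInt : IntervalIntegrable (fun t : ℝ => Real.exp (-ε * t)) MeasureTheory.volume 0 T :=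
    (Real.continuous_exp.comp (continuous_const.mul continuous_id)).intervalIntegrable 0 T
  rw [intervalIntegral.integral_eq_sub_of_hasDerivAt (fun x _ => D x) hInt]
  rw [mul_zero, Real.exp_zero, div_neg, div_neg, sub_div, one_div]
  ring

lemma aux_avg (m : ℕ) (ν : Fin m → ℂ) (hν : ∀ j, (ν j).re ≤ 0) (c : Fin m → ℂ) (a : ℂ)
    (r : ℝ → ℂ) (hrc : ContinuousOn r (Set.Ici 0)) (C ε : ℝ) (hε : 0 < ε)
    (hr : ∀ t : ℝ, 0 ≤ t → ‖r t‖ ≤ C * Real.exp (-ε * t))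
    (key : ∀ t : ℝ, 0 ≤ t → a = (∑ j, c j * Complex.exp (ν j * t)) + r t) :
    a = ∑ j ∈ Finset.univ.filter (fun j => ν j = 0), c j := by
  have hC0 : 0 ≤ C := by
    have := le_trans (norm_nonneg (r 0)) (hr 0 le_rfl)
    simpa using this
  set I : Fin m → ℝ → ℂ := fun j T => ∫ t in (0:ℝ)..T, Complex.exp (ν j * t) with hI
  -- integral identity
  have hint : ∀ T : ℝ, 0 ≤ T →
      (∫ t in (0:ℝ)..T, r t) = a * T - ∑ j, c j * I j T := by
    intro T hT
    have huIcc : Set.uIcc (0:ℝ) T = Set.Icc 0 T := Set.uIcc_of_le hT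
    have hEq : Set.EqOn r (fun t : ℝ => a - ∑ j, c j * Complex.exp (ν j * t))
        (Set.uIcc (0:ℝ) T) := by
      intro t ht
      rw [huIcc] at ht
      have h := key t ht.1
      simp only
      rw [h]; ring
    rw [intervalIntegral.integral_congr hEq]
    have hi1 : IntervalIntegrable (fun _ : ℝ => a) MeasureTheory.volume 0 T :=
      intervalIntegrable_const
    have hcont : ∀ j : Fin m, Continuous (fun t : ℝ => c j * Complex.exp (ν j * t)) := by
      intro j
      exact continuous_const.mul (Complex.continuous_exp.comp (continuous_const.mul
        Complex.continuous_ofReal))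
    have hi2 : IntervalIntegrable (fun t : ℝ => ∑ j, c j * Complex.exp (ν j * t))
        MeasureTheory.volume 0 T :=
      (continuous_finset_sum _ fun j _ => hcont j).intervalIntegrable 0 T
    rw [intervalIntegral.integral_sub hi1 hi2, intervalIntegral.integral_const,
      intervalIntegral.integral_finset_sum (fun j _ => (hcont j).intervalIntegrable 0 T)]
    simp only [hI, intervalIntegral.integral_const_mul, Complex.real_smul, sub_zero,
      Complex.ofReal_sub]
    ring
  -- bound on the remainder integral
  have hbound : ∀ T : ℝ, 0 ≤ T → ‖∫ t in (0:ℝ)..T, r t‖ ≤ C / ε := by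
    intro T hT
    have huIcc : Set.uIcc (0:ℝ) T = Set.Icc 0 T := Set.uIcc_of_le hT
    have hrcT : IntervalIntegrable r MeasureTheory.volume 0 T := by
      apply ContinuousOn.intervalIntegrable
      rw [huIcc]
      exact hrc.mono (Set.Icc_subset_Ici_self)
    have h1 : ‖∫ t in (0:ℝ)..T, r t‖ ≤ ∫ t in (0:ℝ)..T, ‖r t‖ :=
      intervalIntegral.norm_integral_le_integral_norm hT
    have h2 : (∫ t in (0:ℝ)..T, ‖r t‖) ≤ ∫ t in (0:ℝ)..T, C * Real.exp (-ε * t) := by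
      apply intervalIntegral.integral_mono_on hT hrcT.norm
      · exact (continuous_const.mul (Real.continuous_exp.comp
          (continuous_const.mul continuous_id))).intervalIntegrable 0 T
      · exact fun t ht => hr t ht.1
    have h3 : (∫ t in (0:ℝ)..T, C * Real.exp (-ε * t)) = C * ((1 - Real.exp (-ε * T)) / ε) := by
      rw [intervalIntegral.integral_const_mul, aux_exp_integral hε]
    have h4 : C * ((1 - Real.exp (-ε * T)) / ε) ≤ C / ε := by
      have he := Real.exp_pos (-ε * T)
      have h5 : (1 - Real.exp (-ε * T)) / ε ≤ 1 / ε := by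
        gcongr
        linarith
      calc C * ((1 - Real.exp (-ε * T)) / ε) ≤ C * (1 / ε) :=
            mul_le_mul_of_nonneg_left h5 hC0
        _ = C / ε := by ring
    calc ‖∫ t in (0:ℝ)..T, r t‖ ≤ ∫ t in (0:ℝ)..T, ‖r t‖ := h1
      _ ≤ ∫ t in (0:ℝ)..T, C * Real.exp (-ε * t) := h2
      _ = C * ((1 - Real.exp (-ε * T)) / ε) := h3
      _ ≤ C / ε := h4
  set f : ℝ → ℂ := fun T => (∫ t in (0:ℝ)..T, r t) / (T : ℂ) with hf
  have h0 : Tendsto f atTop (nhds 0) := by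
    apply squeeze_zero_norm' (a := fun T : ℝ => (C / ε) / T)
    · filter_upwards [eventually_ge_atTop (1:ℝ)] with T hT1
      have hT0 : (0:ℝ) ≤ T := le_trans zero_le_one hT1
      have hTpos : (0:ℝ) < T := lt_of_lt_of_le one_pos hT1
      have hnT : ‖(T:ℂ)‖ = T := by
        rw [Complex.norm_real, Real.norm_eq_abs, abs_of_nonneg hT0]
      rw [hf]
      simp only [norm_div, hnT]
      gcongr
      exact hbound T hT0
    · exact tendsto_const_nhds.div_atTop tendsto_id
  have hterm : ∀ j : Fin m, Tendsto (fun T : ℝ => I j T / (T:ℂ)) atTop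
      (nhds (if ν j = 0 then 1 else 0)) := by
    intro j
    by_cases hj : ν j = 0
    · rw [if_pos hj]
      have heq1 : (fun _ : ℝ => (1:ℂ)) =ᶠ[atTop] fun T : ℝ => I j T / (T:ℂ) := by
        filter_upwards [eventually_gt_atTop (0:ℝ)] with T hT
        have hTne : (T:ℂ) ≠ 0 := by exact_mod_cast ne_of_gt hT
        simp only [hI, hj, zero_mul, Complex.exp_zero]
        rw [intervalIntegral.integral_const, sub_zero, Complex.real_smul, mul_one,
          div_self hTne]
      exact tendsto_const_nhds.congr' heq1
    · rw [if_neg hj]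
      have hνpos : (0:ℝ) < ‖ν j‖ := norm_pos_iff.2 hj
      apply squeeze_zero_norm' (a := fun T : ℝ => (2 / ‖ν j‖) / T)
      · filter_upwards [eventually_ge_atTop (1:ℝ)] with T hT1
        have hT0 : (0:ℝ) ≤ T := le_trans zero_le_one hT1
        have hTpos : (0:ℝ) < T := lt_of_lt_of_le one_pos hT1
        have hIval : I j T = (Complex.exp (ν j * T) - 1) / ν j := by
          simp only [hI]
          rw [integral_exp_mul_complex hj]
          norm_num
        have h5 : ‖Complex.exp (ν j * T)‖ ≤ 1 := by
          rw [Complex.norm_exp]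
          have hre : (ν j * (T:ℂ)).re = (ν j).re * T := by simp [Complex.mul_re]
          rw [hre]
          calc Real.exp ((ν j).re * T) ≤ Real.exp 0 :=
                Real.exp_le_exp.2 (mul_nonpos_of_nonpos_of_nonneg (hν j) hT0)
            _ = 1 := Real.exp_zero
        have hnorm : ‖I j T‖ ≤ 2 / ‖ν j‖ := by
          rw [hIval, norm_div]
          have h6 : ‖Complex.exp (ν j * T) - 1‖ ≤ 2 := by
            calc ‖Complex.exp (ν j * T) - 1‖ ≤ ‖Complex.exp (ν j * T)‖ + ‖(1:ℂ)‖ :=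
                  norm_sub_le _ _
              _ ≤ 2 := by rw [norm_one]; linarith
          gcongr
        have hnT : ‖(T:ℂ)‖ = T := by
          rw [Complex.norm_real, Real.norm_eq_abs, abs_of_nonneg hT0]
        rw [norm_div, hnT]
        gcongr
      · exact tendsto_const_nhds.div_atTop tendsto_id
  have hsum : Tendsto (fun T : ℝ => a - ∑ j, c j * (I j T / (T:ℂ))) atTop
      (nhds (a - ∑ j, c j * (if ν j = 0 then 1 else 0))) :=
    tendsto_const_nhds.sub (tendsto_finset_sum _ fun j _ => (hterm j).const_mul (c j))
  have heq2 : (fun T : ℝ => a - ∑ j, c j * (I j T / (T:ℂ))) =ᶠ[atTop] f := by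
    filter_upwards [eventually_gt_atTop (0:ℝ)] with T hT
    have hTne : (T:ℂ) ≠ 0 := by exact_mod_cast ne_of_gt hT
    rw [hf]
    simp only
    rw [hint T hT.le, sub_div, mul_div_cancel_right₀ a hTne, Finset.sum_div]
    congr 1
    exact Finset.sum_congr rfl fun j _ => (mul_div_assoc _ _ _).symm
  have h1 : Tendsto f atTop (nhds (a - ∑ j, c j * (if ν j = 0 then 1 else 0))) :=
    hsum.congr' heq2
  have hz := tendsto_nhds_unique h1 h0
  rw [sub_eq_zero] at hz
  rw [hz, Finset.sum_filter]
  apply Finset.sum_congr rfl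
  intro j _
  split <;> simp



/-- Key analytic lemma identifying eigenvalues via Laplace transform.
If `e^{λt} P(t) = ∑_j c_j e^{μ_j t} + R(t)` for all `t ≥ 0`, with the `μ_j` pairwise
distinct, `Re μ_j ≤ Re λ`, `R` continuous with `|R(t)| ≤ C e^{(Re λ - ε)t}` for some
`ε > 0`, and `P` a nonzero polynomial, then `λ = μ_j` for some `j`, `P` is constant and
`P(0) = c_j`. -/
theorem stmt_10 (m : ℕ) (P : Polynomial ℂ) (hP : P ≠ 0) (lam : ℂ)
    (μ : Fin m → ℂ) (hμ : Function.Injective μ) (hμre : ∀ j, (μ j).re ≤ lam.re)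
    (c : Fin m → ℂ) (R : ℝ → ℂ) (hRcont : ContinuousOn R (Set.Ici 0))
    (C ε : ℝ) (hε : 0 < ε)
    (hR : ∀ t : ℝ, 0 ≤ t → ‖R t‖ ≤ C * Real.exp ((lam.re - ε) * t))
    (heq : ∀ t : ℝ, 0 ≤ t →
      Complex.exp (lam * t) * P.eval (t : ℂ)
        = (∑ j, c j * Complex.exp (μ j * t)) + R t) :
    ∃ j, lam = μ j ∧ ∃ a : ℂ, P = Polynomial.C a ∧ a = c j := by
  set r : ℝ → ℂ := fun t => R t * Complex.exp (-(lam * t)) with hrdef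
  -- rearranged identity
  have key : ∀ t : ℝ, 0 ≤ t → P.eval (t : ℂ)
      = (∑ j, c j * Complex.exp ((μ j - lam) * t)) + r t := by
    intro t ht
    have h := heq t ht
    have e1 : ∀ j : Fin m, Complex.exp ((μ j - lam) * (t:ℂ))
        = Complex.exp (μ j * t) * Complex.exp (-(lam * t)) := by
      intro j
      rw [← Complex.exp_add]
      congr 1
      ring
    calc P.eval (t:ℂ)
        = (Complex.exp (lam * t) * P.eval (t:ℂ)) * Complex.exp (-(lam * t)) := by
          rw [mul_comm (Complex.exp (lam * t)) _, mul_assoc, ← Complex.exp_add,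
            add_neg_cancel, Complex.exp_zero, mul_one]
      _ = ((∑ j, c j * Complex.exp (μ j * t)) + R t) * Complex.exp (-(lam * t)) := by rw [h]
      _ = (∑ j, c j * Complex.exp ((μ j - lam) * t)) + r t := by
          rw [add_mul, Finset.sum_mul, hrdef]
          simp only [e1, mul_assoc]
  -- bound on r
  have hrb : ∀ t : ℝ, 0 ≤ t → ‖r t‖ ≤ C * Real.exp (-ε * t) := by
    intro t ht
    rw [hrdef]
    simp only
    rw [norm_mul, Complex.norm_exp]
    have h1 : (-(lam * (t:ℂ))).re = -(lam.re * t) := by simp [Complex.mul_re]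
    rw [h1]
    have harg : (lam.re - ε) * t + -(lam.re * t) = -ε * t := by ring
    calc ‖R t‖ * Real.exp (-(lam.re * t))
        ≤ (C * Real.exp ((lam.re - ε) * t)) * Real.exp (-(lam.re * t)) :=
          mul_le_mul_of_nonneg_right (hR t ht) (Real.exp_nonneg _)
      _ = C * Real.exp (-ε * t) := by rw [mul_assoc, ← Real.exp_add, harg]
  have hC0 : 0 ≤ C := le_trans (norm_nonneg (R 0)) (by simpa using hR 0 le_rfl)
  -- boundedness of P on [0, ∞)
  have hboundP : ∀ t : ℝ, 0 ≤ t → ‖P.eval (t:ℂ)‖ ≤ (∑ j, ‖c j‖) + C := by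
    intro t ht
    rw [key t ht]
    have hexp1 : ∀ j : Fin m, ‖Complex.exp ((μ j - lam) * (t:ℂ))‖ ≤ 1 := by
      intro j
      rw [Complex.norm_exp]
      have hre : ((μ j - lam) * (t:ℂ)).re = (μ j - lam).re * t := by simp [Complex.mul_re]
      rw [hre]
      calc Real.exp ((μ j - lam).re * t) ≤ Real.exp 0 := by
            apply Real.exp_le_exp.2
            apply mul_nonpos_of_nonpos_of_nonneg _ ht
            simp only [Complex.sub_re]
            linarith [hμre j]
        _ = 1 := Real.exp_zero
    calc ‖(∑ j, c j * Complex.exp ((μ j - lam) * t)) + r t‖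
        ≤ ‖∑ j, c j * Complex.exp ((μ j - lam) * (t:ℂ))‖ + ‖r t‖ := norm_add_le _ _
      _ ≤ (∑ j, ‖c j‖) + C := by
          apply add_le_add
          · calc ‖∑ j, c j * Complex.exp ((μ j - lam) * (t:ℂ))‖
                ≤ ∑ j, ‖c j * Complex.exp ((μ j - lam) * (t:ℂ))‖ := norm_sum_le _ _
              _ ≤ ∑ j, ‖c j‖ := by
                  apply Finset.sum_le_sum
                  intro j _
                  rw [norm_mul]
                  calc ‖c j‖ * ‖Complex.exp ((μ j - lam) * (t:ℂ))‖ ≤ ‖c j‖ * 1 :=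
                        mul_le_mul_of_nonneg_left (hexp1 j) (norm_nonneg _)
                    _ = ‖c j‖ := mul_one _
          · calc ‖r t‖ ≤ C * Real.exp (-ε * t) := hrb t ht
              _ ≤ C * 1 := by
                  apply mul_le_mul_of_nonneg_left _ hC0
                  calc Real.exp (-ε * t) ≤ Real.exp 0 := by
                        apply Real.exp_le_exp.2
                        nlinarith
                    _ = 1 := Real.exp_zero
              _ = C := mul_one _
  -- P has degree ≤ 0
  have hdeg : P.degree ≤ 0 := by
    by_contra hd
    push_neg at hd
    have htend : Filter.Tendsto (fun t : ℝ => ‖P.eval ((t : ℂ))‖) atTop atTop := by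
      apply Polynomial.tendsto_norm_atTop P hd
      have : ∀ t : ℝ, ‖(t:ℂ)‖ = |t| := fun t => by
        rw [Complex.norm_real, Real.norm_eq_abs]
      simpa [this] using tendsto_abs_atTop_atTop
    obtain ⟨t, htM, ht0⟩ :=
      ((htend.eventually_gt_atTop ((∑ j, ‖c j‖) + C)).and (eventually_ge_atTop (0:ℝ))).exists
    exact absurd (hboundP t ht0) (not_le.2 htM)
  obtain ⟨a, rfl⟩ : ∃ a, P = Polynomial.C a := ⟨P.coeff 0, Polynomial.eq_C_of_degree_le_zero hdeg⟩
  have ha0 : a ≠ 0 := fun h => hP (by rw [h, map_zero])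
  -- continuity of r on [0, ∞)
  have hrc : ContinuousOn r (Set.Ici 0) := by
    apply hRcont.mul
    exact (Complex.continuous_exp.comp ((continuous_const.mul
      Complex.continuous_ofReal).neg)).continuousOn
  -- apply the averaging lemma
  have key' : ∀ t : ℝ, 0 ≤ t → a = (∑ j, c j * Complex.exp ((μ j - lam) * t)) + r t := by
    intro t ht
    have := key t ht
    rwa [Polynomial.eval_C] at this
  have hν : ∀ j : Fin m, ((fun j => μ j - lam) j).re ≤ 0 := by
    intro j
    simp only [Complex.sub_re]
    linarith [hμre j]
  have ha := aux_avg m (fun j => μ j - lam) hν c a r hrc C ε hε hrb key'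
  have hne : (Finset.univ.filter (fun j => μ j - lam = 0)).Nonempty := by
    by_contra h
    rw [Finset.not_nonempty_iff_eq_empty] at h
    rw [h, Finset.sum_empty] at ha
    exact ha0 ha
  obtain ⟨j0, hj0⟩ := hne
  have hj0' : μ j0 - lam = 0 := (Finset.mem_filter.1 hj0).2
  have hlam : lam = μ j0 := by
    have := sub_eq_zero.1 hj0'
    exact this.symm
  have hsingle : Finset.univ.filter (fun j => μ j - lam = 0) = {j0} := by
    apply Finset.eq_singleton_iff_unique_mem.2
    refine ⟨hj0, fun x hx => ?_⟩
    have hx' : μ x - lam = 0 := (Finset.mem_filter.1 hx).2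
    exact hμ (by rw [sub_eq_zero.1 hx', sub_eq_zero.1 hj0'])
  rw [hsingle, Finset.sum_singleton] at ha
  exact ⟨j0, hlam, a, rfl, ha⟩
end

section
/- Let f : ℝ → M_N(ℂ) be continuous and P-periodic, and let U(θ) solve U' = f(θ)U, U(0) = Id. Then there exist a P-periodic continuously differentiable matrix function Q(θ) with Q(0) = Id and a constant matrix Ω with U(θ) = Q(θ) e^{θΩ}, provided the monodromy matrix U(P) admits a logarithm Ω with U(P) = e^{PΩ} (always possible over ℂ since U(P) is invertible). -/
section FloquetEntryDeriv

open NormedSpace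

attribute [local instance] Matrix.linftyOpNormedAddCommGroup Matrix.linftyOpNormedRing
  Matrix.linftyOpNormedAlgebra

lemma floquet_entry_hasDerivAt {N : ℕ} (A : Matrix (Fin N) (Fin N) ℂ) (t : ℝ) (i j : Fin N) :
    HasDerivAt (fun θ : ℝ => exp (θ • A) i j) ((A * exp (t • A)) i j) t := by
  have h : HasDerivAt (fun θ : ℝ => exp (θ • A)) (A * exp (t • A)) t :=
    hasDerivAt_exp_smul_const' A t
  let e : Matrix (Fin N) (Fin N) ℂ →ₗ[ℝ] ℂ :=
    { toFun := fun M => M i j, map_add' := fun _ _ => rfl, map_smul' := fun _ _ => rfl }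
  have := (LinearMap.toContinuousLinearMap e).hasFDerivAt.comp_hasDerivAt t h
  simp [e] at this
  exact this

lemma floquet_mul_hasDerivAt {N : ℕ} {X Y : ℝ → Matrix (Fin N) (Fin N) ℂ}
    {X' Y' : Matrix (Fin N) (Fin N) ℂ} {t : ℝ} (hX : HasDerivAt X X' t) (hY : HasDerivAt Y Y' t) :
    HasDerivAt (fun s => X s * Y s) (X' * Y t + X t * Y') t :=
  hX.mul hY

end FloquetEntryDeriv

attribute [local instance] Matrix.normedAddCommGroup Matrix.normedSpace

open NormedSpace

lemma floquet_exp_hasDerivAt {N : ℕ} (A : Matrix (Fin N) (Fin N) ℂ) (t : ℝ) :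
    HasDerivAt (fun θ : ℝ => exp (θ • A)) (A * exp (t • A)) t :=
  hasDerivAt_pi.2 fun i => hasDerivAt_pi.2 fun j => floquet_entry_hasDerivAt A t i j

lemma floquet_norm_mul_le {N : ℕ} (A B : Matrix (Fin N) (Fin N) ℂ) :
    ‖A * B‖ ≤ N * ‖A‖ * ‖B‖ := by
  have h0 : (0:ℝ) ≤ N * ‖A‖ * ‖B‖ := by positivity
  rw [Matrix.norm_le_iff h0]
  intro i j
  calc ‖(A * B) i j‖ = ‖∑ k, A i k * B k j‖ := by rw [Matrix.mul_apply]
    _ ≤ ∑ k, ‖A i k * B k j‖ := norm_sum_le _ _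
    _ ≤ ∑ _k : Fin N, ‖A‖ * ‖B‖ := by
        refine Finset.sum_le_sum fun k _ => ?_
        rw [norm_mul]
        exact mul_le_mul (Matrix.norm_entry_le_entrywise_sup_norm A)
          (Matrix.norm_entry_le_entrywise_sup_norm B) (norm_nonneg _) (norm_nonneg _)
    _ = N * ‖A‖ * ‖B‖ := by
        simp [Finset.sum_const, Finset.card_univ]; ring

lemma floquet_ode_unique {N : ℕ} {f : ℝ → Matrix (Fin N) (Fin N) ℂ} (hf : Continuous f)
    {X Y : ℝ → Matrix (Fin N) (Fin N) ℂ}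
    (hX : ∀ t, HasDerivAt X (f t * X t) t)
    (hY : ∀ t, HasDerivAt Y (f t * Y t) t)
    (h0 : X 0 = Y 0) (t : ℝ) : X t = Y t := by
  set a : ℝ := -(|t| + 1) with ha
  set b : ℝ := |t| + 1 with hb
  have habs : 0 ≤ |t| := abs_nonneg t
  have ht0 : (0:ℝ) ∈ Set.Ioo a b := by constructor <;> [linarith; linarith]
  have htt : t ∈ Set.Icc a b := by
    constructor
    · have := neg_abs_le t; simp only [ha]; linarith
    · have := le_abs_self t; simp only [hb]; linarith
  obtain ⟨C, hC⟩ := (isCompact_Icc (a := a) (b := b)).exists_bound_of_continuousOn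
    hf.continuousOn
  set C' : ℝ := max C 0 with hC'
  have hC'0 : 0 ≤ C' := le_max_right _ _
  set p : ℝ → ℝ := fun θ => max a (min θ b) with hp
  have hpmem : ∀ θ, p θ ∈ Set.Icc a b := by
    intro θ
    constructor
    · exact le_max_left _ _
    · have : min θ b ≤ b := min_le_right _ _
      have hab : a ≤ b := by simp only [ha, hb]; linarith
      exact max_le hab this
  have hpid : ∀ θ ∈ Set.Ioo a b, p θ = θ := by
    intro θ hθ
    simp only [hp]
    rw [min_eq_left hθ.2.le, max_eq_right hθ.1.le]
  set K : NNReal := Real.toNNReal (N * C') with hK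
  have hKcoe : (K : ℝ) = N * C' := Real.coe_toNNReal _ (by positivity)
  set v : ℝ → Matrix (Fin N) (Fin N) ℂ → Matrix (Fin N) (Fin N) ℂ :=
    fun θ x => f (p θ) * x with hv
  have hlip : ∀ θ, LipschitzOnWith K (v θ) Set.univ := by
    intro θ
    refine LipschitzOnWith.of_dist_le_mul fun x _ y _ => ?_
    rw [dist_eq_norm, dist_eq_norm, hKcoe]
    have : v θ x - v θ y = f (p θ) * (x - y) := by simp [hv, mul_sub]
    rw [this]
    calc ‖f (p θ) * (x - y)‖ ≤ N * ‖f (p θ)‖ * ‖x - y‖ := floquet_norm_mul_le _ _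
      _ ≤ N * C' * ‖x - y‖ := by
          have h1 : ‖f (p θ)‖ ≤ C' := (hC _ (hpmem θ)).trans (le_max_left _ _)
          have := mul_le_mul_of_nonneg_right
            (mul_le_mul_of_nonneg_left h1 (by positivity : (0:ℝ) ≤ (N:ℝ))) (norm_nonneg (x - y))
          linarith
  have hXc : ContinuousOn X (Set.Icc a b) :=
    (continuous_iff_continuousAt.2 fun θ => (hX θ).continuousAt).continuousOn
  have hYc : ContinuousOn Y (Set.Icc a b) :=
    (continuous_iff_continuousAt.2 fun θ => (hY θ).continuousAt).continuousOn
  exact ODE_solution_unique_of_mem_Icc (fun θ _ => hlip θ) ht0 hXc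
    (fun θ hθ => by rw [hv]; simp only [hpid θ hθ]; exact hX θ)
    (fun _ _ => Set.mem_univ _) hYc
    (fun θ hθ => by rw [hv]; simp only [hpid θ hθ]; exact hY θ)
    (fun _ _ => Set.mem_univ _) h0 htt

noncomputable def floquet_mulCLM {N : ℕ} :
    Matrix (Fin N) (Fin N) ℂ →L[ℝ] Matrix (Fin N) (Fin N) ℂ →L[ℝ] Matrix (Fin N) (Fin N) ℂ :=
  LinearMap.toContinuousLinearMap
    { toFun := fun A => LinearMap.toContinuousLinearMap (LinearMap.mulLeft ℝ A)
      map_add' := by intro A B; ext x; simp [add_mul]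
      map_smul' := by intro c A; ext x; simp [smul_mul_assoc]
    }

@[simp] lemma floquet_mulCLM_apply {N : ℕ} (A B : Matrix (Fin N) (Fin N) ℂ) :
    floquet_mulCLM A B = A * B := rfl

noncomputable def floquet_mulRightCLM {N : ℕ} (B : Matrix (Fin N) (Fin N) ℂ) :
    Matrix (Fin N) (Fin N) ℂ →L[ℝ] Matrix (Fin N) (Fin N) ℂ :=
  LinearMap.toContinuousLinearMap (LinearMap.mulRight ℝ B)

@[simp] lemma floquet_mulRightCLM_apply {N : ℕ} (A B : Matrix (Fin N) (Fin N) ℂ) :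
    floquet_mulRightCLM B A = A * B := rfl

/-- **complex Floquet theorem.** Let `f : ℝ → M_N(ℂ)` be continuous and
`P`-periodic, and let `U` solve `U' = f(θ) U`, `U(0) = Id`.  Given a logarithm `Ω` of
the monodromy matrix, `U(P) = e^{PΩ}` (always possible over `ℂ`), there exists a
`P`-periodic continuously differentiable matrix function `Q` with `Q(0) = Id` and
`U(θ) = Q(θ) e^{θΩ}`. -/
theorem stmt_17 (N : ℕ) (P : ℝ) (hP : 0 < P)
    (f : ℝ → Matrix (Fin N) (Fin N) ℂ) (hf : Continuous f)
    (hfper : ∀ θ, f (θ + P) = f θ)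
    (U : ℝ → Matrix (Fin N) (Fin N) ℂ) (hU0 : U 0 = 1)
    (hUode : ∀ θ, HasDerivAt U (f θ * U θ) θ)
    (Ω : Matrix (Fin N) (Fin N) ℂ) (hΩ : U P = NormedSpace.exp (P • Ω)) :
    ∃ Q : ℝ → Matrix (Fin N) (Fin N) ℂ,
      (∀ θ, Q (θ + P) = Q θ) ∧ Q 0 = 1 ∧ ContDiff ℝ 1 Q ∧
      ∀ θ, U θ = Q θ * NormedSpace.exp (θ • Ω) := by
  -- exponential basics
  have hcomm : ∀ s t : ℝ, Commute (s • Ω) (t • Ω) := fun s t =>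
    (((Commute.refl Ω).smul_right t).smul_left s)
  have hEadd : ∀ s t : ℝ, exp ((s + t) • Ω) = exp (s • Ω) * exp (t • Ω) := by
    intro s t
    rw [add_smul]
    exact Matrix.exp_add_of_commute _ _ (hcomm s t)
  have hE0 : exp ((0:ℝ) • Ω) = 1 := by rw [zero_smul]; exact exp_zero
  have hEinv : ∀ θ : ℝ, exp (θ • Ω) * exp ((-θ) • Ω) = 1 := by
    intro θ
    rw [← hEadd θ (-θ)]
    simp [hE0]
  have hEinv' : ∀ θ : ℝ, exp ((-θ) • Ω) * exp (θ • Ω) = 1 := by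
    intro θ
    have := hEinv (-θ); rwa [neg_neg] at this
  -- monodromy: `U (θ + P) = U θ * U P` by uniqueness of solutions of the ODE
  have hmono : ∀ θ, U (θ + P) = U θ * U P := by
    intro θ
    have hX : ∀ t : ℝ, HasDerivAt (fun s => U (s + P)) (f t * U (t + P)) t := by
      intro t
      have h1 : HasDerivAt (fun s : ℝ => s + P) 1 t := (hasDerivAt_id t).add_const P
      have h2 := (hUode (t + P)).scomp t h1
      rw [hfper] at h2
      simp at h2
      exact h2
    have hY : ∀ t : ℝ, HasDerivAt (fun s => U s * U P) (f t * (U t * U P)) t := by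
      intro t
      have := (floquet_mulRightCLM (U P)).hasFDerivAt.comp_hasDerivAt t (hUode t)
      exact this.congr_deriv (mul_assoc (f t) (U t) (U P))
    have h0 : U (0 + P) = U 0 * U P := by simp [hU0]
    exact floquet_ode_unique hf hX hY h0 θ
  -- define `Q θ = U θ * exp (-θ • Ω)`
  refine ⟨fun θ => U θ * exp ((-θ) • Ω), ?_, ?_, ?_, ?_⟩
  · intro θ
    have hnegsplit : exp ((-(θ + P)) • Ω) = exp ((-P) • Ω) * exp ((-θ) • Ω) := by
      rw [← hEadd (-P) (-θ)]; ring_nf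
    calc U (θ + P) * exp ((-(θ + P)) • Ω)
        = U θ * U P * (exp ((-P) • Ω) * exp ((-θ) • Ω)) := by rw [hmono, hnegsplit]
      _ = U θ * (U P * exp ((-P) • Ω)) * exp ((-θ) • Ω) := by
          simp only [mul_assoc]
      _ = U θ * exp ((-θ) • Ω) := by rw [hΩ, hEinv P, mul_one]
  · simp [hU0, hE0]
  · -- `Q` is continuously differentiable
    have hEneg : ∀ θ : ℝ, HasDerivAt (fun s : ℝ => exp ((-s) • Ω))
        (-(Ω * exp ((-θ) • Ω))) θ := by
      intro θ
      have h1 : HasDerivAt (fun s : ℝ => -s) (-1 : ℝ) θ := (hasDerivAt_id θ).neg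
      have := (floquet_exp_hasDerivAt Ω (-θ)).scomp θ h1
      simp [Function.comp_def] at this ⊢
      exact this
    have hQd : ∀ θ : ℝ, HasDerivAt (fun s => U s * exp ((-s) • Ω))
        (f θ * U θ * exp ((-θ) • Ω) + U θ * -(Ω * exp ((-θ) • Ω))) θ := by
      intro θ
      have := floquet_mul_hasDerivAt (hUode θ) (hEneg θ)
      exact this
    have hUcont : Continuous U := continuous_iff_continuousAt.2 fun θ => (hUode θ).continuousAt
    have hEcont : Continuous fun θ : ℝ => exp ((-θ) • Ω) :=
      continuous_iff_continuousAt.2 fun θ => (hEneg θ).continuousAt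
    rw [contDiff_one_iff_deriv]
    constructor
    · exact fun θ => (hQd θ).differentiableAt
    · have : deriv (fun s => U s * exp ((-s) • Ω)) = fun θ =>
        f θ * U θ * exp ((-θ) • Ω) + U θ * -(Ω * exp ((-θ) • Ω)) :=
        funext fun θ => (hQd θ).deriv
      erw [this]
      exact (((hf.mul hUcont).mul hEcont).add (hUcont.mul ((continuous_const.mul hEcont).neg)))
  · intro θ
    rw [mul_assoc, hEinv' θ, mul_one]
end
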